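/- Let $F$ be an uncountable closed subset of the unit circle $\mathbb{T} \subset \mathbb{C}$. Then there exists a perfect compact set $K \subseteq F$ such that for every $\alpha \in (0, 1/2)$, the function $z \mapsto (\mathrm{dist}(z,K))^{-\alpha}$ belongs to $L_2(\mathbb{T})$ with respect to normalized Lebesgue (Haar) measure on $\mathbb{T}$. -/

import Mathlib

open MeasureTheory Set

/-- The normalized Lebesgue (Haar) measure on the unit circle, as a measure on `ℂ`. -/
noncomputable def circleMeasure : Measure ℂ :=
  (ENNReal.ofReal (2 * Real.pi))⁻¹ •
    Measure.map (fun t : ℝ => Complex.exp (t * Complex.I))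
      (volume.restrict (Ioc 0 (2 * Real.pi)))

section StmtAux
open Metric ENNReal

noncomputable section
namespace Stmt1Aux

def eps (n : ℕ) : ℝ := (2:ℝ) ^ (-((n:ℝ)^2))

lemma eps_pos (n : ℕ) : 0 < eps n := Real.rpow_pos_of_pos two_pos _

lemma eps_zero : eps 0 = 1 := by simp [eps]

lemma measurable_ofReal_infDist_rpow {X : Type*} [MeasurableSpace X] [PseudoMetricSpace X]
    [OpensMeasurableSpace X] (S : Set X) (y : ℝ) :
    Measurable fun z : X => ENNReal.ofReal (infDist z S ^ y) := by
  measurability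

lemma le_infDist' {α : Type*} [PseudoMetricSpace α] {s : Set α} (hs : s.Nonempty) {x : α} {b : ℝ}
    (h : ∀ y ∈ s, b ≤ dist x y) : b ≤ infDist x s := by
  haveI := hs.to_subtype
  rw [Metric.infDist_eq_iInf]
  exact le_ciInf fun y => h y y.2

lemma eps_le_pow (n : ℕ) : eps n ≤ (2:ℝ)⁻¹ ^ n := by
  have h1 : eps n ≤ (2:ℝ) ^ (-(n:ℝ)) := by
    apply Real.rpow_le_rpow_of_exponent_le one_le_two
    have h : (n:ℕ) ≤ n^2 := Nat.le_self_pow (by norm_num) n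
    have : (n:ℝ) ≤ (n:ℝ)^2 := by exact_mod_cast h
    linarith
  calc eps n ≤ (2:ℝ) ^ (-(n:ℝ)) := h1
    _ = (2:ℝ)⁻¹ ^ n := by
        rw [Real.rpow_neg (by norm_num), Real.rpow_natCast, inv_pow]

lemma exists_ofFn_eq {k : ℕ} (l : List Bool) (h : l.length = k) :
    ∃ σ : Fin k → Bool, List.ofFn σ = l := by
  subst h; exact ⟨l.get, List.ofFn_get l⟩

theorem exists_thin_cantor {G : Set ℝ} (hG : IsClosed G) (hGu : ¬ G.Countable) :
    ∃ C : Set ℝ, C ⊆ G ∧ C.Nonempty ∧ IsCompact C ∧ Perfect C ∧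
      ∀ n : ℕ, ∃ c : (Fin n → Bool) → ℝ, C ⊆ ⋃ σ, closedBall (c σ) (eps n) := by
  obtain ⟨P, Pperf, Pne, PsubG⟩ := exists_perfect_nonempty_of_isClosed_of_not_countable hG hGu
  set εe : ℕ → ℝ≥0∞ := fun n => ENNReal.ofReal (eps n) with hεe
  have εe_pos : ∀ n, 0 < εe n := fun n => ENNReal.ofReal_pos.2 (eps_pos n)
  choose C0 C1 h0 h1 hdisj using
    fun {C : Set ℝ} (hC : Perfect C) (hne : C.Nonempty) {ε : ℝ≥0∞} (hε : 0 < ε) =>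
      hC.small_diam_splitting hne hε
  obtain ⟨R, R', ⟨Rperf, Rne, RsubP, Rdiam⟩, -, -⟩ :=
    Pperf.small_diam_splitting Pne (εe_pos 0)
  let DP : List Bool → {E : Set ℝ // Perfect E ∧ E.Nonempty} := fun l =>
    l.rec ⟨R, Rperf, Rne⟩ (fun a l ih => Bool.rec
      ⟨C0 ih.2.1 ih.2.2 (εe_pos (l.length + 1)),
        (h0 ih.2.1 ih.2.2 (εe_pos (l.length + 1))).1,
        (h0 ih.2.1 ih.2.2 (εe_pos (l.length + 1))).2.1⟩
      ⟨C1 ih.2.1 ih.2.2 (εe_pos (l.length + 1)),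
        (h1 ih.2.1 ih.2.2 (εe_pos (l.length + 1))).1,
        (h1 ih.2.1 ih.2.2 (εe_pos (l.length + 1))).2.1⟩ a)
  set Dl : List Bool → Set ℝ := fun l => (DP l).1 with hDl
  have hmono : ∀ (a : Bool) (l : List Bool), Dl (a :: l) ⊆ Dl l := by
    intro a l
    cases a
    · exact (h0 (DP l).2.1 (DP l).2.2 (εe_pos (l.length + 1))).2.2.1
    · exact (h1 (DP l).2.1 (DP l).2.2 (εe_pos (l.length + 1))).2.2.1
  have hdiam : ∀ l : List Bool, EMetric.diam (Dl l) ≤ εe l.length := by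
    intro l
    cases l with
    | nil => exact Rdiam
    | cons a l =>
      cases a
      · exact (h0 (DP l).2.1 (DP l).2.2 (εe_pos (l.length + 1))).2.2.2
      · exact (h1 (DP l).2.1 (DP l).2.2 (εe_pos (l.length + 1))).2.2.2
  have hdisj' : ∀ l : List Bool, Disjoint (Dl (false :: l)) (Dl (true :: l)) := by
    intro l
    exact hdisj (DP l).2.1 (DP l).2.2 (εe_pos (l.length + 1))
  have hsubP : ∀ l : List Bool, Dl l ⊆ P := by
    intro l
    induction l with
    | nil => exact RsubP
    | cons a l ih => exact (hmono a l).trans ih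
  have hdist : ∀ (l : List Bool) (x y : ℝ), x ∈ Dl l → y ∈ Dl l → dist x y ≤ eps l.length := by
    intro l x y hx hy
    have h := (EMetric.edist_le_diam_of_mem hx hy).trans (hdiam l)
    rw [edist_dist] at h
    exact (ENNReal.ofReal_le_ofReal_iff (eps_pos _).le).1 h
  have happend : ∀ (l₁ l₂ : List Bool), Dl (l₁ ++ l₂) ⊆ Dl l₂ := by
    intro l₁
    induction l₁ with
    | nil => intro l₂; simp
    | cons a l ih => intro l₂; exact (hmono a (l ++ l₂)).trans (ih l₂)
  have hbdd : ∀ l : List Bool, Bornology.IsBounded (Dl l) := by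
    intro l
    rw [Metric.isBounded_iff_ediam_ne_top]
    exact ne_top_of_le_ne_top ENNReal.ofReal_ne_top (hdiam l)
  have hcpt : ∀ l : List Bool, IsCompact (Dl l) := fun l =>
    Metric.isCompact_of_isClosed_isBounded (DP l).2.1.closed (hbdd l)
  set Level : ℕ → Set ℝ := fun n => ⋃ σ : Fin n → Bool, Dl (List.ofFn σ) with hLevel
  set C : Set ℝ := ⋂ n, Level n with hC
  have hlev : ∀ (l : List Bool) (k : ℕ), k ≤ l.length → Dl l ⊆ Level k := by
    intro l k hk x hx
    have hsub : Dl l ⊆ Dl (l.drop (l.length - k)) := by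
      conv_lhs => rw [← List.take_append_drop (l.length - k) l]
      exact happend _ _
    have hlen : (l.drop (l.length - k)).length = k := by
      rw [List.length_drop]; omega
    obtain ⟨σ, hσ⟩ := exists_ofFn_eq _ hlen
    exact mem_iUnion.2 ⟨σ, hσ ▸ hsub hx⟩
  have hbranch : ∀ l : List Bool, (⋂ m, Dl (List.replicate m false ++ l)).Nonempty := by
    intro l
    apply IsCompact.nonempty_iInter_of_sequence_nonempty_isCompact_isClosed
    · intro m
      rw [List.replicate_succ, List.cons_append]
      exact hmono false (List.replicate m false ++ l)
    · exact fun m => (DP _).2.2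
    · exact hcpt _
    · exact fun m => (DP _).2.1.closed
  have hbranchC : ∀ l : List Bool, ∃ y ∈ C, y ∈ Dl l := by
    intro l
    obtain ⟨y, hy⟩ := hbranch l
    simp only [mem_iInter] at hy
    refine ⟨y, ?_, by simpa using hy 0⟩
    rw [hC]
    refine mem_iInter.2 fun k => ?_
    refine hlev (List.replicate k false ++ l) k ?_ (hy k)
    simp
  have hCsub : C ⊆ Dl [] := by
    intro x hx
    have := mem_iInter.1 hx 0
    obtain ⟨σ, hσ⟩ := mem_iUnion.1 this
    simpa [List.ofFn_zero] using hσ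
  have hCne : C.Nonempty := by
    obtain ⟨y, hy, -⟩ := hbranchC []
    exact ⟨y, hy⟩
  have hCclosed : IsClosed C := by
    apply isClosed_iInter
    intro n
    exact isClosed_iUnion_of_finite fun σ => (DP _).2.1.closed
  have hCcpt : IsCompact C :=
    Metric.isCompact_of_isClosed_isBounded hCclosed ((hbdd []).subset hCsub)
  refine ⟨C, fun x hx => PsubG (hsubP [] (hCsub hx)), hCne, hCcpt, ⟨hCclosed, ?_⟩, ?_⟩
  · -- accumulation points
    intro x hx
    rw [accPt_iff_nhds]
    intro U hU
    obtain ⟨ε, hε, hball⟩ := Metric.mem_nhds_iff.1 hU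
    obtain ⟨n, hn⟩ := exists_pow_lt_of_lt_one hε (by norm_num : (2:ℝ)⁻¹ < 1)
    obtain ⟨σ, hσ⟩ := mem_iUnion.1 (mem_iInter.1 hx n)
    set l : List Bool := List.ofFn σ with hl
    have hlen : l.length = n := List.length_ofFn
    -- pick the child not containing x
    have key : ∃ b : Bool, x ∉ Dl (b :: l) := by
      by_cases h : x ∈ Dl (false :: l)
      · exact ⟨true, fun h' => (Set.disjoint_left.1 (hdisj' l) h) h'⟩
      · exact ⟨false, h⟩
    obtain ⟨b, hb⟩ := key
    obtain ⟨y, hyC, hyb⟩ := hbranchC (b :: l)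
    refine ⟨y, ⟨?_, hyC⟩, fun h => hb (h ▸ hyb)⟩
    apply hball
    rw [mem_ball]
    calc dist y x ≤ eps l.length := hdist l y x (hmono b l hyb) hσ
      _ ≤ (2:ℝ)⁻¹ ^ n := hlen ▸ eps_le_pow n
      _ < ε := hn
  · -- covers
    intro n
    have hne' : ∀ σ : Fin n → Bool, (Dl (List.ofFn σ)).Nonempty := fun σ => (DP _).2.2
    choose c hc using hne'
    refine ⟨c, fun x hx => ?_⟩
    obtain ⟨σ, hσ⟩ := mem_iUnion.1 (mem_iInter.1 hx n)
    refine mem_iUnion.2 ⟨σ, ?_⟩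
    rw [mem_closedBall]
    have := hdist (List.ofFn σ) x (c σ) hσ (hc σ)
    rwa [List.length_ofFn] at this

lemma exp_sub_exp_eq (t s : ℝ) :
    Complex.exp (t * Complex.I) - Complex.exp (s * Complex.I)
      = Complex.exp (((t+s)/2 : ℝ) * Complex.I)
        * (2 * Complex.I * Complex.sin (((t-s)/2 : ℝ))) := by
  have hsin : Complex.exp ((((t-s)/2 : ℝ) : ℂ) * Complex.I)
      - Complex.exp (-(((t-s)/2 : ℝ) : ℂ) * Complex.I)
      = 2 * Complex.I * Complex.sin (((t-s)/2 : ℝ)) := by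
    rw [Complex.sin]
    linear_combination (Complex.exp ((((t-s)/2 : ℝ) : ℂ) * Complex.I)
      - Complex.exp (-(((t-s)/2 : ℝ) : ℂ) * Complex.I)) * Complex.I_sq
  have h1 : ((t : ℂ)) * Complex.I
      = (((t+s)/2 : ℝ) : ℂ) * Complex.I + (((t-s)/2 : ℝ) : ℂ) * Complex.I := by
    push_cast; ring
  have h2 : ((s : ℂ)) * Complex.I
      = (((t+s)/2 : ℝ) : ℂ) * Complex.I + -(((t-s)/2 : ℝ) : ℂ) * Complex.I := by
    push_cast; ring
  rw [h1, h2, Complex.exp_add, Complex.exp_add, ← mul_sub, hsin]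

lemma dist_exp_exp (t s : ℝ) :
    dist (Complex.exp (t * Complex.I)) (Complex.exp (s * Complex.I))
      = 2 * |Real.sin ((t - s)/2)| := by
  rw [Complex.dist_eq, exp_sub_exp_eq, norm_mul, Complex.norm_exp_ofReal_mul_I, one_mul,
    ← Complex.ofReal_sin, norm_mul, norm_mul, Complex.norm_two, Complex.norm_I, Complex.norm_real,
    Real.norm_eq_abs]
  ring

lemma sin_lower {u : ℝ} (h : |u| ≤ 2*Real.pi) :
    (2/Real.pi) * min |u| (2*Real.pi - |u|) ≤ 2 * |Real.sin (u/2)| := by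
  have hpi := Real.pi_pos
  set v := |u| with hv
  have hv0 : 0 ≤ v := abs_nonneg u
  have h1 : |Real.sin (u/2)| = |Real.sin (v/2)| := by
    rcases le_or_gt 0 u with hu | hu
    · rw [hv, abs_of_nonneg hu]
    · rw [hv, abs_of_neg hu, show (-u)/2 = -(u/2) by ring, Real.sin_neg, abs_neg]
  have h2 : |Real.sin (v/2)| = Real.sin (v/2) :=
    abs_of_nonneg (Real.sin_nonneg_of_nonneg_of_le_pi (by linarith) (by linarith))
  rw [h1, h2]
  rcases le_or_gt v Real.pi with hc | hc
  · have hj := Real.mul_le_sin (x := v/2) (by linarith) (by linarith)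
    calc (2/Real.pi) * min v (2*Real.pi - v) ≤ (2/Real.pi) * v :=
          mul_le_mul_of_nonneg_left (min_le_left _ _) (by positivity)
      _ = 2 * (2/Real.pi * (v/2)) := by ring
      _ ≤ 2 * Real.sin (v/2) := by linarith
  · have hw : Real.sin (v/2) = Real.sin ((2*Real.pi - v)/2) := by
      rw [show (2*Real.pi - v)/2 = Real.pi - v/2 by ring, Real.sin_pi_sub]
    have hj := Real.mul_le_sin (x := (2*Real.pi - v)/2) (by linarith) (by linarith)
    rw [hw]
    calc (2/Real.pi) * min v (2*Real.pi - v) ≤ (2/Real.pi) * (2*Real.pi - v) :=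
          mul_le_mul_of_nonneg_left (min_le_right _ _) (by positivity)
      _ = 2 * (2/Real.pi * ((2*Real.pi - v)/2)) := by ring
      _ ≤ 2 * Real.sin ((2*Real.pi - v)/2) := by linarith

lemma infDist_le_chord {D : Set ℝ} {t svar : ℝ}
    (hs : svar ∈ D) (hs2 : svar + 2*Real.pi ∈ D) (hs3 : svar - 2*Real.pi ∈ D)
    (h : |t - svar| ≤ 2*Real.pi) :
    (2/Real.pi) * infDist t D
      ≤ dist (Complex.exp (t * Complex.I)) (Complex.exp (svar * Complex.I)) := by
  have hpi := Real.pi_pos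
  rw [dist_exp_exp]
  refine le_trans ?_ (sin_lower h)
  refine mul_le_mul_of_nonneg_left ?_ (by positivity : (0:ℝ) ≤ 2/Real.pi)
  apply le_min
  · have h' := infDist_le_dist_of_mem (x := t) hs
    rwa [Real.dist_eq] at h'
  · rcases le_or_gt svar t with hc | hc
    · have h' := infDist_le_dist_of_mem (x := t) hs2
      rw [Real.dist_eq] at h'
      have habs : |t - svar| = t - svar := abs_of_nonneg (by linarith)
      have habs2 : |t - (svar + 2*Real.pi)| = 2*Real.pi - (t - svar) := by
        rw [abs_of_nonpos (by rw [habs] at h; linarith)]; ring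
      rw [habs]
      linarith [habs2 ▸ h']
    · have h' := infDist_le_dist_of_mem (x := t) hs3
      rw [Real.dist_eq] at h'
      have habs : |t - svar| = svar - t := by rw [abs_of_neg (by linarith)]; ring
      have habs2 : |t - (svar - 2*Real.pi)| = 2*Real.pi - (svar - t) := by
        rw [abs_of_nonneg (by rw [habs] at h; linarith)]; ring
      rw [habs]
      linarith [habs2 ▸ h']


lemma key_real {s : ℝ} (hs0 : 0 < s) (hs1 : s < 1) (k : ℕ) :
    eps (k+1) ^ (-s) * ((2:ℝ)^k * (18 * eps k)) ≤ (18 * 2 ^ ((4/(1-s)+1 : ℝ))) * 2⁻¹^k := by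
  have h2 : (0:ℝ) < 2 := two_pos
  have h1s : (0:ℝ) < 1 - s := by linarith
  have e1 : eps (k+1) ^ (-s) = (2:ℝ) ^ ((((k:ℝ)+1)^2) * s) := by
    rw [eps, ← Real.rpow_mul h2.le]; push_cast; ring_nf
  have e3 : (2⁻¹:ℝ)^k = (2:ℝ) ^ (-(k:ℝ)) := by
    rw [Real.rpow_neg h2.le, Real.rpow_natCast, inv_pow]
  rw [e1, e3, ← Real.rpow_natCast 2 k, eps]
  have lhs_eq : (2:ℝ) ^ ((((k:ℝ)+1)^2) * s) * ((2:ℝ) ^ ((k:ℝ)) * (18 * (2:ℝ) ^ (-((k:ℝ)^2))))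
      = 18 * (2:ℝ) ^ ((((k:ℝ)+1)^2) * s + ((k:ℝ) + -((k:ℝ)^2))) := by
    rw [Real.rpow_add h2, Real.rpow_add h2]; ring
  have rhs_eq : (18 * (2:ℝ) ^ ((4/(1-s)+1 : ℝ))) * (2:ℝ) ^ (-(k:ℝ))
      = 18 * (2:ℝ) ^ ((4/(1-s)+1 : ℝ) + -(k:ℝ)) := by
    rw [Real.rpow_add h2 (4/(1-s)+1 : ℝ) (-(k:ℝ))]; ring
  rw [lhs_eq, rhs_eq]
  have hexp : (((k:ℝ)+1)^2) * s + ((k:ℝ) + -((k:ℝ)^2)) ≤ (4/(1-s)+1 : ℝ) + -(k:ℝ) := by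
    have hx : (0:ℝ) ≤ (k:ℝ) := Nat.cast_nonneg k
    have h4 : 4/(1-s)*(1-s) = 4 := div_mul_cancel₀ _ (ne_of_gt h1s)
    nlinarith [sq_nonneg ((1-s)*(k:ℝ) - 2), mul_nonneg h1s.le hx, sq_nonneg ((k:ℝ)),
      mul_nonneg (mul_nonneg h1s.le h1s.le) hx, mul_nonneg (mul_nonneg h1s.le hx) hx]
  exact mul_le_mul_of_nonneg_left (Real.rpow_le_rpow_of_exponent_le one_le_two hexp)
    (by norm_num)

theorem lintegral_infDist_rpow_lt_top {D : Set ℝ} (hDne : D.Nonempty)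
    (hcov : ∀ n : ℕ, ∃ c : (Fin n → Bool) × Fin 3 → ℝ,
      D ⊆ ⋃ j, closedBall (c j) (eps n))
    {s : ℝ} (hs0 : 0 < s) (hs1 : s < 1) :
    ∫⁻ t in Ioc 0 (2*Real.pi), ENNReal.ofReal (infDist t D ^ (-s)) ∂volume < ⊤ := by
  classical
  set π := Real.pi
  set d : ℝ → ℝ := fun t => infDist t D with hd
  -- volume of sublevel sets
  have hvol : ∀ n : ℕ, volume {t : ℝ | d t ≤ eps n} ≤ ENNReal.ofReal ((2:ℝ)^n * (18 * eps n)) := by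
    intro n
    obtain ⟨c, hc⟩ := hcov n
    have hsub : {t : ℝ | d t ≤ eps n} ⊆
        ⋃ j : (Fin n → Bool) × Fin 3, closedBall (c j) (3 * eps n) := by
      intro t ht
      have hlt : infDist t D < 2 * eps n := lt_of_le_of_lt ht (by linarith [eps_pos n])
      obtain ⟨y, hyD, hy⟩ := (infDist_lt_iff hDne).1 hlt
      obtain ⟨j, hj⟩ := mem_iUnion.1 (hc hyD)
      refine mem_iUnion.2 ⟨j, ?_⟩
      rw [mem_closedBall] at hj ⊢
      calc dist t (c j) ≤ dist t y + dist y (c j) := dist_triangle _ _ _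
        _ ≤ 2 * eps n + eps n := by linarith
        _ = 3 * eps n := by ring
    calc volume {t : ℝ | d t ≤ eps n}
        ≤ volume (⋃ j : (Fin n → Bool) × Fin 3, closedBall (c j) (3 * eps n)) :=
          measure_mono hsub
      _ ≤ ∑' j : (Fin n → Bool) × Fin 3, volume (closedBall (c j) (3 * eps n)) :=
          measure_iUnion_le _
      _ = ∑' _j : (Fin n → Bool) × Fin 3, ENNReal.ofReal (2 * (3 * eps n)) := by
          simp [Real.volume_closedBall]
      _ = ((Fintype.card ((Fin n → Bool) × Fin 3) : ℝ≥0∞)) * ENNReal.ofReal (2 * (3 * eps n)) := by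
          rw [tsum_fintype]; simp [Finset.sum_const, nsmul_eq_mul]
      _ ≤ ENNReal.ofReal ((2:ℝ)^n * (18 * eps n)) := by
          rw [Fintype.card_prod, Fintype.card_fun, Fintype.card_fin, Fintype.card_bool]
          rw [← ENNReal.ofReal_natCast, ← ENNReal.ofReal_mul (by positivity)]
          apply ENNReal.ofReal_le_ofReal
          apply le_of_eq
          push_cast [Fintype.card_fin]
          ring
  -- the layer sets
  set W : ℕ → Set ℝ := fun n => Nat.casesOn n
    {t ∈ Ioc 0 (2*π) | d t = 0 ∨ eps 1 < d t}
    (fun m => {t ∈ Ioc 0 (2*π) | eps (m+2) < d t ∧ d t ≤ eps (m+1)}) with hW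
  have hcover : Ioc 0 (2*π) ⊆ ⋃ n, W n := by
    intro t ht
    by_cases h0 : d t = 0
    · exact mem_iUnion.2 ⟨0, ht, Or.inl h0⟩
    by_cases h1 : eps 1 < d t
    · exact mem_iUnion.2 ⟨0, ht, Or.inr h1⟩
    push_neg at h1
    have hdpos : 0 < d t := lt_of_le_of_ne (infDist_nonneg) (Ne.symm h0)
    have hex : ∃ m, eps m < d t := by
      obtain ⟨m, hm⟩ := exists_pow_lt_of_lt_one hdpos (by norm_num : (2:ℝ)⁻¹ < 1)
      exact ⟨m, lt_of_le_of_lt (eps_le_pow m) hm⟩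
    let m₀ := Nat.find hex
    have hspec : eps m₀ < d t := Nat.find_spec hex
    have hmin : ∀ k, k < m₀ → ¬ eps k < d t := fun k hk => Nat.find_min hex hk
    have hm0 : m₀ ≠ 0 := by
      intro h
      rw [h] at hspec
      have : eps 0 = 1 := by simp [eps]
      have h11 : eps 1 < 1 := by
        rw [eps]; apply Real.rpow_lt_one_of_one_lt_of_neg one_lt_two; norm_num
      linarith [this ▸ hspec]
    have hm1 : m₀ ≠ 1 := by
      intro h
      rw [h] at hspec
      linarith
    obtain ⟨m, hm⟩ : ∃ m, m₀ = m + 2 := ⟨m₀ - 2, by omega⟩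
    refine mem_iUnion.2 ⟨m + 1, ht, ?_, ?_⟩
    · rw [← hm]; exact hspec
    · have := hmin (m+1) (by omega)
      linarith [not_lt.1 this]
  -- constants
  set Cr : ℝ := 18 * 2 ^ ((4/(1-s)+1 : ℝ)) with hCr
  set r : ℝ≥0∞ := ENNReal.ofReal 2⁻¹ with hr
  set Kc : ℝ≥0∞ := ENNReal.ofReal (eps 1 ^ (-s)) * ENNReal.ofReal (2*π) + ENNReal.ofReal Cr
    with hKc
  have hKc_ne : Kc ≠ ⊤ := by
    rw [hKc]
    exact ENNReal.add_ne_top.2 ⟨ENNReal.mul_ne_top ENNReal.ofReal_ne_top ENNReal.ofReal_ne_top,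
      ENNReal.ofReal_ne_top⟩
  have hbound : ∀ n : ℕ, (∫⁻ t in W n, ENNReal.ofReal (d t ^ (-s)) ∂volume) ≤ Kc * r ^ n := by
    intro n
    cases n with
    | zero =>
      have hpt : ∀ t ∈ W 0, ENNReal.ofReal (d t ^ (-s)) ≤ ENNReal.ofReal (eps 1 ^ (-s)) := by
        rintro t ⟨-, h | h⟩
        · rw [h, Real.zero_rpow (by linarith : -s ≠ 0)]
          simp
        · apply ENNReal.ofReal_le_ofReal
          exact Real.rpow_le_rpow_of_nonpos (eps_pos 1) h.le (by linarith)
      calc (∫⁻ t in W 0, ENNReal.ofReal (d t ^ (-s)) ∂volume)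
          ≤ ∫⁻ _t in W 0, ENNReal.ofReal (eps 1 ^ (-s)) ∂volume :=
            setLIntegral_mono measurable_const hpt
        _ = ENNReal.ofReal (eps 1 ^ (-s)) * volume (W 0) := setLIntegral_const _ _
        _ ≤ ENNReal.ofReal (eps 1 ^ (-s)) * ENNReal.ofReal (2*π) := by
            gcongr
            have : W 0 ⊆ Ioc 0 (2*π) := fun t ht => ht.1
            calc volume (W 0) ≤ volume (Ioc 0 (2*π)) := measure_mono this
              _ = ENNReal.ofReal (2*π) := by rw [Real.volume_Ioc, sub_zero]
        _ ≤ Kc * r ^ 0 := by rw [pow_zero, mul_one, hKc]; exact le_self_add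
    | succ m =>
      have hpt : ∀ t ∈ W (m+1), ENNReal.ofReal (d t ^ (-s)) ≤
          ENNReal.ofReal (eps (m+2) ^ (-s)) := by
        rintro t ⟨-, h, -⟩
        apply ENNReal.ofReal_le_ofReal
        exact Real.rpow_le_rpow_of_nonpos (eps_pos (m+2)) h.le (by linarith)
      have hWsub : W (m+1) ⊆ {t : ℝ | d t ≤ eps (m+1)} := by
        rintro t ⟨-, -, h⟩; exact h
      calc (∫⁻ t in W (m+1), ENNReal.ofReal (d t ^ (-s)) ∂volume)
          ≤ ∫⁻ _t in W (m+1), ENNReal.ofReal (eps (m+2) ^ (-s)) ∂volume :=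
            setLIntegral_mono measurable_const hpt
        _ = ENNReal.ofReal (eps (m+2) ^ (-s)) * volume (W (m+1)) := setLIntegral_const _ _
        _ ≤ ENNReal.ofReal (eps (m+2) ^ (-s)) * ENNReal.ofReal ((2:ℝ)^(m+1) * (18 * eps (m+1)))
            := by gcongr; exact (measure_mono hWsub).trans (hvol (m+1))
        _ = ENNReal.ofReal (eps (m+2) ^ (-s) * ((2:ℝ)^(m+1) * (18 * eps (m+1)))) := by
            rw [← ENNReal.ofReal_mul (Real.rpow_nonneg (eps_pos _).le _)]
        _ ≤ ENNReal.ofReal (Cr * 2⁻¹^(m+1)) := by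
            apply ENNReal.ofReal_le_ofReal
            exact key_real hs0 hs1 (m+1)
        _ = ENNReal.ofReal Cr * r ^ (m+1) := by
            rw [ENNReal.ofReal_mul (by rw [hCr]; positivity), ENNReal.ofReal_pow (by norm_num)]
        _ ≤ Kc * r ^ (m+1) := by gcongr; rw [hKc]; exact le_add_self
  calc (∫⁻ t in Ioc 0 (2*π), ENNReal.ofReal (d t ^ (-s)) ∂volume)
      ≤ ∫⁻ t in ⋃ n, W n, ENNReal.ofReal (d t ^ (-s)) ∂volume := lintegral_mono_set hcover
    _ ≤ ∑' n, ∫⁻ t in W n, ENNReal.ofReal (d t ^ (-s)) ∂volume := lintegral_iUnion_le _ _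
    _ ≤ ∑' n, Kc * r ^ n := ENNReal.tsum_le_tsum hbound
    _ = Kc * ∑' n, r ^ n := ENNReal.tsum_mul_left
    _ = Kc * (1 - r)⁻¹ := by rw [ENNReal.tsum_geometric]
    _ < ⊤ := by
        apply ENNReal.mul_lt_top hKc_ne.lt_top
        rw [ENNReal.inv_lt_top, tsub_pos_iff_lt]
        exact ENNReal.ofReal_lt_one.2 (by norm_num)


theorem main_aux (F : Set ℂ) (hFsub : F ⊆ Metric.sphere (0:ℂ) 1)
    (hFclosed : IsClosed F) (hFunc : ¬ F.Countable) :
    ∃ K : Set ℂ, K ⊆ F ∧ K.Nonempty ∧ IsCompact K ∧ Perfect K ∧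
      ∀ α : ℝ, α ∈ Ioo (0:ℝ) (1/2) →
        MemLp (fun z : ℂ => (Metric.infDist z K) ^ (-α)) 2 circleMeasure := by
  have hpi := Real.pi_pos
  set φ : ℝ → ℂ := fun t => Complex.exp (t * Complex.I) with hφ
  have hφcont : Continuous φ := by
    exact (Complex.continuous_ofReal.mul continuous_const).cexp
  have hper : ∀ u : ℝ, φ (u + 2*Real.pi) = φ u := by
    intro u
    rw [hφ]
    dsimp only
    push_cast
    rw [add_mul, Complex.exp_add, Complex.exp_two_pi_mul_I, mul_one]
  have hper2 : ∀ u : ℝ, φ (u - 2*Real.pi) = φ u := by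
    intro u
    have := hper (u - 2*Real.pi)
    rw [sub_add_cancel] at this
    exact this.symm
  set G : Set ℝ := Icc 0 (2*Real.pi) ∩ φ ⁻¹' F with hG
  have hGclosed : IsClosed G := isClosed_Icc.inter (hFclosed.preimage hφcont)
  have hGunc : ¬ G.Countable := by
    intro hc
    apply hFunc
    have hsub : F ⊆ φ '' G := by
      intro z hz
      have hz1 : ‖z‖ = 1 := by
        have := mem_sphere_zero_iff_norm.1 (hFsub hz)
        exact this
      obtain ⟨θ, hθ⟩ := (Complex.norm_eq_one_iff z).1 hz1
      have h2pi : (0:ℝ) < 2*Real.pi := by positivity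
      refine ⟨θ - ⌊θ / (2*Real.pi)⌋ * (2*Real.pi), ⟨⟨?_, ?_⟩, ?_⟩, ?_⟩
      · exact Int.sub_floor_div_mul_nonneg θ h2pi
      · exact (Int.sub_floor_div_mul_lt θ h2pi).le
      · rw [mem_preimage]
        have : φ (θ - ⌊θ / (2*Real.pi)⌋ * (2*Real.pi)) = z := by
          rw [hφ]
          dsimp only
          rw [← hθ, Complex.exp_eq_exp_iff_exists_int]
          exact ⟨-⌊θ / (2*Real.pi)⌋, by push_cast; ring⟩
        rw [this]; exact hz
      · rw [hφ]
        dsimp only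
        rw [← hθ, Complex.exp_eq_exp_iff_exists_int]
        exact ⟨-⌊θ / (2*Real.pi)⌋, by push_cast; ring⟩
    exact (hc.image φ).mono hsub
  -- Cantor set
  obtain ⟨C, hCG, hCne, hCcpt, hCperf, hCcov⟩ := exists_thin_cantor hGclosed hGunc
  have hCsubIcc : C ⊆ Icc 0 (2*Real.pi) := fun x hx => (hCG hx).1
  have hCF : ∀ t ∈ C, φ t ∈ F := fun t ht => (hCG ht).2
  -- diameter bound on C
  have hCdiam : ∀ a ∈ C, ∀ b ∈ C, dist a b ≤ 2 := by
    obtain ⟨c0, hc0⟩ := hCcov 0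
    intro a ha b hb
    obtain ⟨σ, hσ⟩ := mem_iUnion.1 (hc0 ha)
    obtain ⟨τ, hτ⟩ := mem_iUnion.1 (hc0 hb)
    have hστ : σ = τ := Subsingleton.elim _ _
    subst hστ
    rw [mem_closedBall, eps_zero] at hσ hτ
    calc dist a b ≤ dist a (c0 σ) + dist (c0 σ) b := dist_triangle _ _ _
      _ ≤ 1 + 1 := by rw [dist_comm (c0 σ) b]; exact add_le_add hσ hτ
      _ = 2 := by norm_num
  -- injectivity
  have hinj : InjOn φ C := by
    intro a ha b hb hab
    rw [hφ] at hab
    obtain ⟨n, hn⟩ := Complex.exp_eq_exp_iff_exists_int.1 hab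
    have h0 : ((a - b - n * (2*Real.pi) : ℝ) : ℂ) * Complex.I = 0 := by
      push_cast
      linear_combination hn
    have h0' : (a - b - n * (2*Real.pi) : ℝ) = 0 := by
      rcases mul_eq_zero.1 h0 with h | h
      · exact_mod_cast h
      · exact absurd h Complex.I_ne_zero
    have hn0 : n = 0 := by
      by_contra hne
      have h1 : (1:ℝ) ≤ |(n:ℝ)| := by
        have := Int.one_le_abs hne
        calc (1:ℝ) ≤ ((|n| : ℤ) : ℝ) := by exact_mod_cast this
          _ = |(n:ℝ)| := by push_cast; rfl
      have hab2 : |a - b| ≤ 2 := by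
        have := hCdiam a ha b hb
        rwa [Real.dist_eq] at this
      have : a - b = n * (2*Real.pi) := by linarith
      rw [this, abs_mul] at hab2
      have hgt : 2*Real.pi > 2 := by
        have := Real.pi_gt_three
        linarith
      have : |2*Real.pi| = 2*Real.pi := abs_of_pos (by positivity)
      nlinarith [abs_nonneg ((n:ℝ))]
    rw [hn0] at h0'
    push_cast at h0'
    linarith
  -- K
  set K : Set ℂ := φ '' C with hK
  have hKsub : K ⊆ F := by
    rintro z ⟨t, ht, rfl⟩
    exact hCF t ht
  have hKne : K.Nonempty := hCne.image φ
  have hKcpt : IsCompact K := hCcpt.image hφcont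
  have hKperf : Perfect K := by
    constructor
    · exact hKcpt.isClosed
    · rintro x ⟨c, hcC, rfl⟩
      rw [accPt_iff_nhds]
      intro U hU
      have hUc : φ ⁻¹' U ∈ nhds c := hφcont.continuousAt.preimage_mem_nhds hU
      obtain ⟨y, ⟨hyU, hyC⟩, hyne⟩ := accPt_iff_nhds.1 (hCperf.acc c hcC) _ hUc
      exact ⟨φ y, ⟨hyU, mem_image_of_mem φ hyC⟩, fun h => hyne (hinj hyC hcC h)⟩
  -- D
  set D : Set ℝ := C ∪ (fun x => x + 2*Real.pi) '' C ∪ (fun x => x - 2*Real.pi) '' C with hD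
  have hDne : D.Nonempty := ⟨hCne.choose, Or.inl (Or.inl hCne.choose_spec)⟩
  have hDcpt : IsCompact D :=
    (hCcpt.union (hCcpt.image (continuous_id.add continuous_const))).union
      (hCcpt.image (continuous_id.sub continuous_const))
  have hDclosed : IsClosed D := hDcpt.isClosed
  have hDcov : ∀ n : ℕ, ∃ c : (Fin n → Bool) × Fin 3 → ℝ,
      D ⊆ ⋃ j, closedBall (c j) (eps n) := by
    intro n
    obtain ⟨c, hc⟩ := hCcov n
    refine ⟨fun j => c j.1 + ![0, 2*Real.pi, -(2*Real.pi)] j.2, ?_⟩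
    rintro x ((hx | ⟨y, hy, rfl⟩) | ⟨y, hy, rfl⟩)
    · obtain ⟨σ, hσ⟩ := mem_iUnion.1 (hc hx)
      refine mem_iUnion.2 ⟨(σ, 0), ?_⟩
      simpa using hσ
    · obtain ⟨σ, hσ⟩ := mem_iUnion.1 (hc hy)
      refine mem_iUnion.2 ⟨(σ, 1), ?_⟩
      rw [mem_closedBall] at hσ ⊢
      rw [show (fun j : (Fin n → Bool) × Fin 3 => c j.1 + ![0, 2*Real.pi, -(2*Real.pi)] j.2) (σ, 1)
        = c σ + 2*Real.pi from by simp]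
      rw [Real.dist_eq] at hσ ⊢
      rw [show y + 2*Real.pi - (c σ + 2*Real.pi) = y - c σ from by ring]
      exact hσ
    · obtain ⟨σ, hσ⟩ := mem_iUnion.1 (hc hy)
      refine mem_iUnion.2 ⟨(σ, 2), ?_⟩
      rw [mem_closedBall] at hσ ⊢
      rw [show (fun j : (Fin n → Bool) × Fin 3 => c j.1 + ![0, 2*Real.pi, -(2*Real.pi)] j.2) (σ, 2)
        = c σ + -(2*Real.pi) from by simp]
      rw [Real.dist_eq] at hσ ⊢
      rw [show y - 2*Real.pi - (c σ + -(2*Real.pi)) = y - c σ from by ring]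
      exact hσ
  -- membership of D transfers to K
  have hDK : ∀ t ∈ D, φ t ∈ K := by
    rintro t ((ht | ⟨y, hy, rfl⟩) | ⟨y, hy, rfl⟩)
    · exact mem_image_of_mem φ ht
    · rw [hper y]; exact mem_image_of_mem φ hy
    · rw [hper2 y]; exact mem_image_of_mem φ hy
  -- key pointwise bound
  have hkey : ∀ t ∈ Ioc 0 (2*Real.pi), (2/Real.pi) * infDist t D ≤ infDist (φ t) K := by
    intro t ht
    apply le_infDist' hKne
    rintro z ⟨sv, hsv, rfl⟩
    have hsvI : sv ∈ Icc 0 (2*Real.pi) := hCsubIcc hsv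
    have habs : |t - sv| ≤ 2*Real.pi := by
      rw [abs_le]
      constructor
      · linarith [ht.1, hsvI.2]
      · linarith [ht.2, hsvI.1]
    have := infDist_le_chord (D := D) (Or.inl (Or.inl hsv))
      (Or.inl (Or.inr (mem_image_of_mem _ hsv))) (Or.inr (mem_image_of_mem _ hsv)) habs
    exact this
  have main : ∀ α : ℝ, α ∈ Ioo (0:ℝ) (1/2) →
      MemLp (fun z : ℂ => (Metric.infDist z K) ^ (-α)) 2 circleMeasure := by
    intro α hα
    obtain ⟨hα0, hα1⟩ := hα
    have hs0 : 0 < 2*α := by linarith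
    have hs1 : 2*α < 1 := by linarith
    have hdm : Measurable fun z : ℂ => infDist z K :=
      (Metric.continuous_infDist_pt K).measurable
    have hfm : Measurable fun z : ℂ => infDist z K ^ (-α) := by measurability
    rw [memLp_two_iff_integrable_sq hfm.aestronglyMeasurable]
    refine ⟨(hfm.pow_const 2).aestronglyMeasurable, ?_⟩
    rw [hasFiniteIntegral_iff_ofReal (ae_of_all _ fun z => sq_nonneg _)]
    have hsq : ∀ z : ℂ, ENNReal.ofReal ((infDist z K ^ (-α)) ^ 2)
        = ENNReal.ofReal (infDist z K ^ (-(2*α))) := by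
      intro z
      congr 1
      rw [← Real.rpow_natCast (infDist z K ^ (-α)) 2, ← Real.rpow_mul infDist_nonneg]
      congr 1
      push_cast
      ring
    simp only [hsq]
    rw [show circleMeasure = (ENNReal.ofReal (2 * Real.pi))⁻¹ •
        Measure.map (fun t : ℝ => Complex.exp (t * Complex.I))
          (volume.restrict (Ioc 0 (2 * Real.pi))) from rfl]
    rw [lintegral_smul_measure]
    rw [lintegral_map (measurable_ofReal_infDist_rpow K (-(2*α))) hφcont.measurable]
    have hfin := lintegral_infDist_rpow_lt_top hDne hDcov hs0 hs1
    have hdm2 : Measurable fun t : ℝ => ENNReal.ofReal (infDist t D ^ (-(2*α))) :=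
      measurable_ofReal_infDist_rpow D (-(2*α))
    have hmono : (∫⁻ t in Ioc 0 (2*Real.pi),
        ENNReal.ofReal (infDist (Complex.exp (t * Complex.I)) K ^ (-(2*α)))) ≤
        ENNReal.ofReal ((2/Real.pi) ^ (-(2*α))) *
          ∫⁻ t in Ioc 0 (2*Real.pi), ENNReal.ofReal (infDist t D ^ (-(2*α))) := by
      rw [← lintegral_const_mul _ hdm2]
      apply setLIntegral_mono (measurable_const.mul hdm2)
      intro t ht
      by_cases h0 : infDist t D = 0
      · have htD : t ∈ D := (hDclosed.mem_iff_infDist_zero hDne).2 h0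
        have hφtK : Complex.exp (t * Complex.I) ∈ K := hDK t htD
        rw [infDist_zero_of_mem hφtK,
          Real.zero_rpow (ne_of_lt (by linarith : -(2*α) < 0))]
        simp
      · have hpos : 0 < infDist t D := lt_of_le_of_ne infDist_nonneg (Ne.symm h0)
        have hineq := hkey t ht
        have h1 : infDist (Complex.exp (t * Complex.I)) K ^ (-(2*α)) ≤
            ((2/Real.pi) * infDist t D) ^ (-(2*α)) :=
          Real.rpow_le_rpow_of_nonpos (by positivity) hineq (by linarith)
        have h2 : ((2/Real.pi) * infDist t D) ^ (-(2*α))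
            = (2/Real.pi) ^ (-(2*α)) * infDist t D ^ (-(2*α)) :=
          Real.mul_rpow (by positivity) infDist_nonneg
        simp only [Pi.mul_apply]
        rw [← ENNReal.ofReal_mul (by positivity)]
        apply ENNReal.ofReal_le_ofReal
        rw [← h2]
        exact h1
    refine ENNReal.mul_lt_top ?_
      (lt_of_le_of_lt hmono (ENNReal.mul_lt_top ENNReal.ofReal_lt_top hfin))
    exact ENNReal.inv_lt_top.2 (ENNReal.ofReal_pos.2 (by positivity))
  exact ⟨K, hKsub, hKne, hKcpt, hKperf, main⟩


end Stmt1Aux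
end
end StmtAux

theorem stmt_1 (F : Set ℂ) (hFsub : F ⊆ Metric.sphere (0:ℂ) 1)
    (hFclosed : IsClosed F) (hFunc : ¬ F.Countable) :
    ∃ K : Set ℂ, K ⊆ F ∧ K.Nonempty ∧ IsCompact K ∧ Perfect K ∧
      ∀ α : ℝ, α ∈ Ioo (0:ℝ) (1/2) →
        MemLp (fun z : ℂ => (Metric.infDist z K) ^ (-α)) 2 circleMeasure :=
  Stmt1Aux.main_aux F hFsub hFclosed hFunc
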